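/- arXiv:2410.14468 — 3 statements merged into one kernel-verified Lean document; each statement's English description precedes it below -/
import Mathlib

section
/- For any two policies π and π′, the difference of returns equals the discounted sum of expected advantages of π along trajectories of π′: J(π′) − J(π) = Σ_{t=0}^∞ γ^t E_{x ~ d_t^{π′,μ}} E_{a ~ π′(x)} [A^π(x,a)]. (All series converge absolutely since S and A are finite, r is bounded, and 0 ≤ γ < 1.) -/
open scoped BigOperators

section MDPDefs

variable {S A : Type*} [Fintype S] [Fintype A]

/-- Expectation of a real-valued function under a PMF on a finite type (a finite sum). -/
noncomputable def pmfExp {X : Type*} [Fintype X] (p : PMF X) (f : X → ℝ) : ℝ :=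
  ∑ x, (p x).toReal * f x

/-- Time-`t` state distribution `d_t^{π,μ}`:
`d_0 = μ` and `d_{t+1}` is obtained by sampling `x ~ d_t`, `a ~ π x`, `s' ~ P x a`. -/
noncomputable def stateDist (P : S → A → PMF S) (π : S → PMF A) (μ : PMF S) : ℕ → PMF S
  | 0 => μ
  | t + 1 => (stateDist P π μ t).bind fun x => (π x).bind fun a => P x a

/-- State value function `V^π(s) = Σ_t γ^t E_{x ~ d_t^{π, δ_s}} E_{a ~ π x}[r x a]`. -/
noncomputable def Vval (P : S → A → PMF S) (r : S → A → ℝ) (γ : ℝ) (π : S → PMF A) (s : S) : ℝ :=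
  ∑' t : ℕ, γ ^ t * pmfExp (stateDist P π (PMF.pure s) t) fun x => pmfExp (π x) fun a => r x a

/-- Return from an initial distribution: `J(π) = E_{s~μ}[V^π(s)]`. -/
noncomputable def Jret (P : S → A → PMF S) (r : S → A → ℝ) (γ : ℝ) (π : S → PMF A) (μ : PMF S) : ℝ :=
  pmfExp μ (Vval P r γ π)

/-- State-action value `Q^π(s,a) = r(s,a) + γ E_{s' ~ P s a}[V^π(s')]`. -/
noncomputable def Qval (P : S → A → PMF S) (r : S → A → ℝ) (γ : ℝ) (π : S → PMF A)
    (s : S) (a : A) : ℝ :=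
  r s a + γ * pmfExp (P s a) (Vval P r γ π)

/-- Advantage `A^π(s,a) = Q^π(s,a) - V^π(s)`. -/
noncomputable def Adv (P : S → A → PMF S) (r : S → A → ℝ) (γ : ℝ) (π : S → PMF A)
    (s : S) (a : A) : ℝ :=
  Qval P r γ π s a - Vval P r γ π s

/-- Discounted state-visitation distribution `ν^{π,μ}(s) = (1-γ) Σ_t γ^t d_t^{π,μ}(s)`. -/
noncomputable def visit (P : S → A → PMF S) (π : S → PMF A) (μ : PMF S) (γ : ℝ) (s : S) : ℝ :=
  (1 - γ) * ∑' t : ℕ, γ ^ t * (stateDist P π μ t s).toReal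

/-- `ℓ¹` distance between two PMFs on a finite type. -/
noncomputable def l1Dist {X : Type*} [Fintype X] (p q : PMF X) : ℝ :=
  ∑ x, |(p x).toReal - (q x).toReal|

/-- KL divergence `D_KL(p‖q) = Σ_{x : p x > 0} p x * log (p x / q x)` on a finite type. -/
noncomputable def pmfKL {X : Type*} [Fintype X] (p q : PMF X) : ℝ :=
  ∑ x, if p x = 0 then 0 else (p x).toReal * Real.log ((p x).toReal / (q x).toReal)

/-- Mixed behavior policy: teacher's action when the intervention indicator is on,
student's action otherwise. -/
noncomputable def mixPolicy {S A : Type*} (πt πs : S → PMF A) (T : S → Bool) (s : S) : PMF A :=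
  if T s then πt s else πs s

/-- Finite-horizon value of a deterministic policy, defined recursively:
`V_0(s) = r s (σ s)` and `V_{k+1}(s) = r s (σ s) + γ E_{s' ~ P s (σ s)}[V_k s']`. -/
noncomputable def Vfin (P : S → A → PMF S) (r : S → A → ℝ) (γ : ℝ) (σ : S → A) : ℕ → S → ℝ
  | 0, s => r s (σ s)
  | k + 1, s => r s (σ s) + γ * pmfExp (P s (σ s)) (Vfin P r γ σ k)

/-- Finite-horizon value of the switching (mixed) policy that at each step picks whichever of
the two deterministic policies gives the larger continuation value. -/
noncomputable def Wswitch (P : S → A → PMF S) (r : S → A → ℝ) (γ : ℝ)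
    (πt πs : S → A) : ℕ → S → ℝ
  | 0, s => max (r s (πt s)) (r s (πs s))
  | k + 1, s =>
      max (r s (πt s) + γ * pmfExp (P s (πt s)) (Wswitch P r γ πt πs k))
          (r s (πs s) + γ * pmfExp (P s (πs s)) (Wswitch P r γ πt πs k))

end MDPDefs

namespace PDAux

variable {X Y : Type*} [Fintype X] [Fintype Y]

lemma sum_toReal (p : PMF X) : ∑ x, (p x).toReal = 1 := by
  have h := p.tsum_coe
  rw [tsum_fintype] at h
  rw [← ENNReal.toReal_sum (fun a _ => PMF.apply_ne_top p a), h, ENNReal.toReal_one]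

lemma pmfExp_const (p : PMF X) (c : ℝ) : pmfExp p (fun _ => c) = c := by
  simp [pmfExp, ← Finset.sum_mul, sum_toReal]

lemma pmfExp_add (p : PMF X) (f g : X → ℝ) :
    pmfExp p (fun x => f x + g x) = pmfExp p f + pmfExp p g := by
  simp [pmfExp, mul_add, Finset.sum_add_distrib]

lemma pmfExp_sub (p : PMF X) (f g : X → ℝ) :
    pmfExp p (fun x => f x - g x) = pmfExp p f - pmfExp p g := by
  simp [pmfExp, mul_sub, Finset.sum_sub_distrib]

lemma pmfExp_smul (p : PMF X) (c : ℝ) (f : X → ℝ) :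
    pmfExp p (fun x => c * f x) = c * pmfExp p f := by
  simp only [pmfExp, Finset.mul_sum]
  exact Finset.sum_congr rfl (fun x _ => by ring)

lemma pmfExp_abs_le (p : PMF X) (f : X → ℝ) {C : ℝ} (h : ∀ x, |f x| ≤ C) :
    |pmfExp p f| ≤ C := by
  calc |pmfExp p f| ≤ ∑ x, |(p x).toReal * f x| := Finset.abs_sum_le_sum_abs _ _
    _ ≤ ∑ x, (p x).toReal * C := by
        apply Finset.sum_le_sum
        intro x _
        rw [abs_mul, abs_of_nonneg ENNReal.toReal_nonneg]
        exact mul_le_mul_of_nonneg_left (h x) ENNReal.toReal_nonneg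
    _ = C := by rw [← Finset.sum_mul, sum_toReal, one_mul]

lemma pmfExp_bind (p : PMF X) (q : X → PMF Y) (f : Y → ℝ) :
    pmfExp (p.bind q) f = pmfExp p (fun x => pmfExp (q x) f) := by
  unfold pmfExp
  have hb : ∀ y, ((p.bind q) y).toReal = ∑ x, (p x).toReal * (q x y).toReal := by
    intro y
    rw [PMF.bind_apply, tsum_fintype,
      ENNReal.toReal_sum (fun a _ => ENNReal.mul_ne_top (PMF.apply_ne_top p a) (PMF.apply_ne_top (q a) y))]
    simp [ENNReal.toReal_mul]
  simp only [hb, Finset.sum_mul, Finset.mul_sum]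
  rw [Finset.sum_comm]
  congr 1; ext x; congr 1; ext y; ring

variable {S A : Type*} [Fintype S] [Fintype A]

lemma stateDist_bind (P : S → A → PMF S) (π : S → PMF A) (μ : PMF S) (q : S → PMF S) :
    ∀ t, stateDist P π (μ.bind q) t = μ.bind (fun s => stateDist P π (q s) t) := by
  intro t
  induction t with
  | zero => simp [stateDist]
  | succ t ih => simp [stateDist, ih, PMF.bind_bind]

lemma stateDist_pure_bind (P : S → A → PMF S) (π : S → PMF A) (μ : PMF S) (t : ℕ) :
    stateDist P π μ t = μ.bind (fun s => stateDist P π (PMF.pure s) t) := by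
  conv_lhs => rw [← PMF.bind_pure μ]
  exact stateDist_bind P π μ PMF.pure t

/-- Summability of the discounted expectation series. -/
lemma summable_disc {γ : ℝ} (hγ0 : 0 ≤ γ) (hγ1 : γ < 1) {C : ℝ}
    (u : ℕ → ℝ) (hu : ∀ t, |u t| ≤ C) :
    Summable (fun t : ℕ => γ ^ t * u t) := by
  apply Summable.of_norm_bounded (g := fun t => γ ^ t * C)
  · exact (summable_geometric_of_lt_one hγ0 hγ1).mul_right C
  · intro t
    rw [Real.norm_eq_abs, abs_mul, abs_of_nonneg (pow_nonneg hγ0 t)]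
    exact mul_le_mul_of_nonneg_left (hu t) (pow_nonneg hγ0 t)

lemma rbar_bound (r : S → A → ℝ) (π : S → PMF A) :
    ∃ C : ℝ, ∀ x, |pmfExp (π x) (fun a => r x a)| ≤ C := by
  refine ⟨∑ s, ∑ a, |r s a|, fun x => pmfExp_abs_le _ _ (fun a => ?_)⟩
  calc |r x a| ≤ ∑ a', |r x a'| := Finset.single_le_sum (f := fun a' => |r x a'|) (fun a' _ => abs_nonneg _) (Finset.mem_univ a)
    _ ≤ ∑ s, ∑ a', |r s a'| :=
        Finset.single_le_sum (f := fun s => ∑ a', |r s a'|)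
          (fun s _ => Finset.sum_nonneg fun a' _ => abs_nonneg _) (Finset.mem_univ x)

/-- `J` expansion: expected value equals the discounted sum of expected rewards. -/
lemma pmfExp_Vval (P : S → A → PMF S) (r : S → A → ℝ) {γ : ℝ} (hγ0 : 0 ≤ γ) (hγ1 : γ < 1)
    (π : S → PMF A) (μ : PMF S) :
    pmfExp μ (Vval P r γ π) =
      ∑' t : ℕ, γ ^ t * pmfExp (stateDist P π μ t) (fun x => pmfExp (π x) fun a => r x a) := by
  obtain ⟨C, hC⟩ := rbar_bound r π
  have key : ∀ t : ℕ,
      ∑ s, (μ s).toReal * (γ ^ t * pmfExp (stateDist P π (PMF.pure s) t) (fun x => pmfExp (π x) fun a => r x a))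
      = γ ^ t * pmfExp (stateDist P π μ t) (fun x => pmfExp (π x) fun a => r x a) := by
    intro t
    rw [stateDist_pure_bind P π μ t, pmfExp_bind]
    unfold pmfExp
    rw [Finset.mul_sum]
    exact Finset.sum_congr rfl (fun s _ => by ring)
  have hs : ∀ s ∈ (Finset.univ : Finset S), Summable (fun t : ℕ => (μ s).toReal *
      (γ ^ t * pmfExp (stateDist P π (PMF.pure s) t) (fun x => pmfExp (π x) fun a => r x a))) :=
    fun s _ => (summable_disc hγ0 hγ1 _ (fun t => pmfExp_abs_le _ _ hC)).mul_left _
  have expand : pmfExp μ (Vval P r γ π) = ∑ s, (μ s).toReal *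
      ∑' t : ℕ, γ ^ t * pmfExp (stateDist P π (PMF.pure s) t) (fun x => pmfExp (π x) fun a => r x a) := rfl
  rw [expand]
  have h2 : ∀ s : S, (μ s).toReal *
      (∑' t : ℕ, γ ^ t * pmfExp (stateDist P π (PMF.pure s) t) (fun x => pmfExp (π x) fun a => r x a))
      = ∑' t : ℕ, (μ s).toReal *
        (γ ^ t * pmfExp (stateDist P π (PMF.pure s) t) (fun x => pmfExp (π x) fun a => r x a)) :=
    fun s => (tsum_mul_left).symm
  simp_rw [h2]
  rw [← Summable.tsum_finsetSum hs]
  exact tsum_congr key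

lemma Vval_bound (P : S → A → PMF S) (r : S → A → ℝ) {γ : ℝ} (hγ0 : 0 ≤ γ) (hγ1 : γ < 1)
    (π : S → PMF A) : ∃ D : ℝ, ∀ s, |Vval P r γ π s| ≤ D := by
  obtain ⟨C, hC⟩ := rbar_bound r π
  set C' := max C 0 with hC'
  have hC'0 : 0 ≤ C' := le_max_right _ _
  have hC'' : ∀ x, |pmfExp (π x) (fun a => r x a)| ≤ C' := fun x => (hC x).trans (le_max_left _ _)
  refine ⟨(1 - γ)⁻¹ * C', fun s => ?_⟩
  have hsum : Summable (fun t : ℕ => γ ^ t *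
      pmfExp (stateDist P π (PMF.pure s) t) (fun x => pmfExp (π x) fun a => r x a)) :=
    summable_disc hγ0 hγ1 _ (fun t => pmfExp_abs_le _ _ hC'')
  have hnorm : Summable (fun t : ℕ => ‖γ ^ t *
      pmfExp (stateDist P π (PMF.pure s) t) (fun x => pmfExp (π x) fun a => r x a)‖) := hsum.abs
  calc |Vval P r γ π s| ≤ ∑' t : ℕ, ‖γ ^ t *
      pmfExp (stateDist P π (PMF.pure s) t) (fun x => pmfExp (π x) fun a => r x a)‖ :=
        norm_tsum_le_tsum_norm hnorm
    _ ≤ ∑' t : ℕ, γ ^ t * C' := by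
        refine Summable.tsum_le_tsum (fun t => ?_) hnorm
          ((summable_geometric_of_lt_one hγ0 hγ1).mul_right C')
        rw [Real.norm_eq_abs, abs_mul, abs_of_nonneg (pow_nonneg hγ0 t)]
        exact mul_le_mul_of_nonneg_left (pmfExp_abs_le _ _ hC'') (pow_nonneg hγ0 t)
    _ = (1 - γ)⁻¹ * C' := by
        rw [tsum_mul_right, tsum_geometric_of_lt_one hγ0 hγ1, mul_comm]

end PDAux

open PDAux


/-- Performance difference, trajectory form: for any two policies `π` and `π'`,
`J(π') − J(π) = Σ_{t=0}^∞ γ^t E_{x ~ d_t^{π',μ}} E_{a ~ π'(x)} [A^π(x,a)]`. -/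
theorem perf_diff_trajectory {S A : Type*} [Fintype S] [Nonempty S] [Fintype A] [Nonempty A]
    (P : S → A → PMF S) (r : S → A → ℝ) (γ : ℝ) (hγ0 : 0 ≤ γ) (hγ1 : γ < 1)
    (π π' : S → PMF A) (μ : PMF S) :
    Jret P r γ π' μ - Jret P r γ π μ =
      ∑' t : ℕ, γ ^ t *
        pmfExp (stateDist P π' μ t) (fun x => pmfExp (π' x) fun a => Adv P r γ π x a) := by
  set V := Vval P r γ π with hV
  set d := stateDist P π' μ with hd
  set rbar' : S → ℝ := fun x => pmfExp (π' x) (fun a => r x a) with hrbar'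
  obtain ⟨D, hD⟩ := Vval_bound P r hγ0 hγ1 π
  obtain ⟨C, hC⟩ := rbar_bound r π'
  set u : ℕ → ℝ := fun t => γ ^ t * pmfExp (d t) V with hu
  -- step 1 : expand the expected advantage
  have step1 : ∀ x : S, pmfExp (π' x) (fun a => Adv P r γ π x a)
      = rbar' x + γ * pmfExp (π' x) (fun a => pmfExp (P x a) V) - V x := by
    intro x
    have : (fun a => Adv P r γ π x a)
        = fun a => (r x a + γ * pmfExp (P x a) V) - V x := by
      funext a; simp [Adv, Qval, hV]
    rw [this, pmfExp_sub, pmfExp_const, pmfExp_add, pmfExp_smul]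
  -- step 2 : one-step evolution of the expected value
  have step2 : ∀ t : ℕ, pmfExp (d (t + 1)) V
      = pmfExp (d t) (fun x => pmfExp (π' x) (fun a => pmfExp (P x a) V)) := by
    intro t
    have : d (t + 1) = (d t).bind fun x => (π' x).bind fun a => P x a := rfl
    rw [this, pmfExp_bind]
    exact congrArg _ (funext fun x => pmfExp_bind _ _ _)
  -- step 3 : termwise identity
  have step3 : ∀ t : ℕ, γ ^ t * pmfExp (d t) (fun x => pmfExp (π' x) fun a => Adv P r γ π x a)
      = γ ^ t * pmfExp (d t) rbar' + (u (t + 1) - u t) := by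
    intro t
    have e1 : (fun x => pmfExp (π' x) fun a => Adv P r γ π x a)
        = fun x => (rbar' x + γ * pmfExp (π' x) (fun a => pmfExp (P x a) V)) - V x := by
      funext x; rw [step1 x]
    rw [e1, pmfExp_sub, pmfExp_add, pmfExp_smul, ← step2 t, hu]
    ring
  -- bounds and summability
  have hub : ∀ t, |pmfExp (d t) V| ≤ D := fun t => pmfExp_abs_le _ _ hD
  have hu_sum : Summable u := summable_disc hγ0 hγ1 _ hub
  have hu_shift : Summable (fun t => u (t + 1)) := (summable_nat_add_iff 1).2 hu_sum
  have htel_sum : Summable (fun t => u (t + 1) - u t) := hu_shift.sub hu_sum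
  have hrbar_sum : Summable (fun t : ℕ => γ ^ t * pmfExp (d t) rbar') :=
    summable_disc hγ0 hγ1 _ (fun t => pmfExp_abs_le _ _ hC)
  -- telescoping sum
  have hu0 : u 0 = pmfExp μ V := by simp [hu, hd, stateDist]
  have hu_tendsto : Filter.Tendsto u Filter.atTop (nhds 0) := by
    apply squeeze_zero_norm (fun t => ?_)
      (by simpa using (tendsto_pow_atTop_nhds_zero_of_lt_one hγ0 hγ1).mul_const D)
    rw [Real.norm_eq_abs, hu, abs_mul, abs_of_nonneg (pow_nonneg hγ0 t)]
    exact mul_le_mul_of_nonneg_left (hub t) (pow_nonneg hγ0 t)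
  have htel : ∑' t : ℕ, (u (t + 1) - u t) = -u 0 := by
    have h1 := htel_sum.hasSum.tendsto_sum_nat
    have h2 : (fun n => ∑ i ∈ Finset.range n, (u (i + 1) - u i)) = fun n => u n - u 0 := by
      funext n; exact Finset.sum_range_sub u n
    rw [h2] at h1
    have h3 : Filter.Tendsto (fun n => u n - u 0) Filter.atTop (nhds (0 - u 0)) :=
      hu_tendsto.sub_const (u 0)
    rw [zero_sub] at h3
    exact tendsto_nhds_unique h1 h3
  -- assemble
  calc Jret P r γ π' μ - Jret P r γ π μ
      = (∑' t : ℕ, γ ^ t * pmfExp (d t) rbar') + (∑' t : ℕ, (u (t + 1) - u t)) := by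
        rw [htel, hu0, Jret, Jret, pmfExp_Vval P r hγ0 hγ1 π' μ]
        simp [hd, hrbar', hV, sub_eq_add_neg]
    _ = ∑' t : ℕ, (γ ^ t * pmfExp (d t) rbar' + (u (t + 1) - u t)) :=
        (Summable.tsum_add hrbar_sum htel_sum).symm
    _ = ∑' t : ℕ, γ ^ t *
        pmfExp (d t) (fun x => pmfExp (π' x) fun a => Adv P r γ π x a) :=
        tsum_congr fun t => (step3 t).symm
end

section
/- (Performance difference lemma, visitation form.) For any two policies π and π′, J(π′) − J(π) = (1/(1−γ)) · E_{s ~ ν^{π′,μ}} E_{a ~ π′(s)} [A^π(s,a)], where the outer expectation is the sum over s ∈ S of ν^{π′,μ}(s) times the inner expectation. -/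
open scoped BigOperators

section Aux
variable {S A : Type*} [Fintype S] [Fintype A]

lemma PDL.sum_toReal_one {X : Type*} [Fintype X] (p : PMF X) : ∑ x, (p x).toReal = 1 := by
  rw [← ENNReal.toReal_sum (fun a _ => p.apply_ne_top a), ← tsum_fintype (L := .unconditional _), p.tsum_coe,
    ENNReal.toReal_one]

lemma PDL.toReal_le_one {X : Type*} (p : PMF X) (x : X) : (p x).toReal ≤ 1 := by
  simpa using ENNReal.toReal_mono (by simp) (p.coe_le_one x)

lemma PDL.pmfExp_const {X : Type*} [Fintype X] (p : PMF X) (c : ℝ) :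
    pmfExp p (fun _ => c) = c := by
  simp [pmfExp, ← Finset.sum_mul, PDL.sum_toReal_one]

lemma PDL.pmfExp_abs_le {X : Type*} [Fintype X] (p : PMF X) (f : X → ℝ) :
    |pmfExp p f| ≤ ∑ x, |f x| := by
  refine (Finset.abs_sum_le_sum_abs _ _).trans (Finset.sum_le_sum fun x _ => ?_)
  rw [abs_mul, abs_of_nonneg ENNReal.toReal_nonneg]
  exact mul_le_of_le_one_left (abs_nonneg _) (PDL.toReal_le_one p x)

lemma PDL.pmfExp_add {X : Type*} [Fintype X] (p : PMF X) (f g : X → ℝ) :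
    pmfExp p (fun x => f x + g x) = pmfExp p f + pmfExp p g := by
  simp [pmfExp, mul_add, Finset.sum_add_distrib]

lemma PDL.pmfExp_sub {X : Type*} [Fintype X] (p : PMF X) (f g : X → ℝ) :
    pmfExp p (fun x => f x - g x) = pmfExp p f - pmfExp p g := by
  simp [pmfExp, mul_sub, Finset.sum_sub_distrib]

lemma PDL.pmfExp_mul {X : Type*} [Fintype X] (p : PMF X) (c : ℝ) (f : X → ℝ) :
    pmfExp p (fun x => c * f x) = c * pmfExp p f := by
  simp [pmfExp, Finset.mul_sum, mul_left_comm]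

lemma PDL.pmfExp_bind {X Y : Type*} [Fintype X] [Fintype Y] (p : PMF X) (q : X → PMF Y)
    (f : Y → ℝ) : pmfExp (p.bind q) f = pmfExp p (fun x => pmfExp (q x) f) := by
  have h : ∀ y, ((p.bind q) y).toReal = ∑ x, (p x).toReal * ((q x) y).toReal := by
    intro y
    rw [PMF.bind_apply, tsum_fintype,
      ENNReal.toReal_sum (fun x _ => ENNReal.mul_ne_top (p.apply_ne_top x) ((q x).apply_ne_top y))]
    exact Finset.sum_congr rfl fun x _ => ENNReal.toReal_mul
  unfold pmfExp
  simp_rw [h, Finset.sum_mul]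
  rw [Finset.sum_comm]
  simp [Finset.mul_sum, mul_assoc]

set_option linter.unusedSectionVars false in
lemma PDL.stateDist_eq (P : S → A → PMF S) (π : S → PMF A) (μ : PMF S) :
    ∀ t, stateDist P π μ t = μ.bind fun s => stateDist P π (PMF.pure s) t
  | 0 => (PMF.bind_pure μ).symm
  | t + 1 => by
      show (stateDist P π μ t).bind _ = _
      rw [PDL.stateDist_eq P π μ t, PMF.bind_bind]
      rfl

lemma PDL.summable_geom {γ : ℝ} (hγ0 : 0 ≤ γ) (hγ1 : γ < 1) (c : ℕ → ℝ) (C : ℝ)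
    (hc : ∀ t, |c t| ≤ C) : Summable fun t => γ ^ t * c t := by
  refine Summable.of_norm_bounded
    ((summable_geometric_of_lt_one hγ0 hγ1).mul_left C) fun t => ?_
  rw [Real.norm_eq_abs, abs_mul, abs_pow, abs_of_nonneg hγ0, mul_comm]
  exact mul_le_mul_of_nonneg_right (hc t) (pow_nonneg hγ0 t)

end Aux

set_option maxHeartbeats 1000000 in
/-- Performance difference lemma, visitation form:
`J(π') − J(π) = (1/(1−γ)) E_{s ~ ν^{π',μ}} E_{a ~ π'(s)} [A^π(s,a)]`. -/
theorem perf_diff_visitation {S A : Type*} [Fintype S] [Nonempty S] [Fintype A] [Nonempty A]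
    (P : S → A → PMF S) (r : S → A → ℝ) (γ : ℝ) (hγ0 : 0 ≤ γ) (hγ1 : γ < 1)
    (π π' : S → PMF A) (μ : PMF S) :
    Jret P r γ π' μ - Jret P r γ π μ =
      (1 / (1 - γ)) *
        ∑ s, visit P π' μ γ s * pmfExp (π' s) (fun a => Adv P r γ π s a) := by
  classical
  have hne : (1 : ℝ) - γ ≠ 0 := by linarith
  set d : ℕ → PMF S := stateDist P π' μ with hd
  set V : S → ℝ := Vval P r γ π with hV
  set ρ : S → ℝ := fun x => pmfExp (π' x) (fun a => r x a) with hρ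
  set g : S → ℝ := fun s => pmfExp (π' s) (fun a => Adv P r γ π s a) with hg
  -- summability facts
  have SV : Summable fun t => γ ^ t * pmfExp (d t) V :=
    PDL.summable_geom hγ0 hγ1 _ (∑ x, |V x|) fun t => PDL.pmfExp_abs_le (d t) V
  have Sρ : Summable fun t => γ ^ t * pmfExp (d t) ρ :=
    PDL.summable_geom hγ0 hγ1 _ (∑ x, |ρ x|) fun t => PDL.pmfExp_abs_le (d t) ρ
  have Sg : Summable fun t => γ ^ t * pmfExp (d t) g :=
    PDL.summable_geom hγ0 hγ1 _ (∑ x, |g x|) fun t => PDL.pmfExp_abs_le (d t) g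
  -- pointwise decomposition of g
  have hgs : ∀ s, g s = ρ s + γ * pmfExp ((π' s).bind (P s)) V - V s := by
    intro s
    have h1 : g s = pmfExp (π' s)
        (fun a => (r s a + γ * pmfExp (P s a) V) - V s) := rfl
    rw [h1, PDL.pmfExp_sub, PDL.pmfExp_add, PDL.pmfExp_mul, PDL.pmfExp_const,
      PDL.pmfExp_bind]
  -- step identity
  have hstep : ∀ t, pmfExp (d (t + 1)) V
      = pmfExp (d t) (fun x => pmfExp ((π' x).bind (P x)) V) := by
    intro t
    have : d (t + 1) = (d t).bind fun x => (π' x).bind (P x) := rfl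
    rw [this, PDL.pmfExp_bind]
  -- termwise identity
  have hterm : ∀ t, γ ^ t * pmfExp (d t) g
      = γ ^ t * pmfExp (d t) ρ
        + (γ ^ (t + 1) * pmfExp (d (t + 1)) V - γ ^ t * pmfExp (d t) V) := by
    intro t
    have h2 : pmfExp (d t) g
        = pmfExp (d t) ρ + γ * pmfExp (d (t + 1)) V - pmfExp (d t) V := by
      have : pmfExp (d t) g = pmfExp (d t)
          (fun s => ρ s + γ * pmfExp ((π' s).bind (P s)) V - V s) := by
        congr 1; funext s; exact hgs s
      rw [this, PDL.pmfExp_sub, PDL.pmfExp_add, PDL.pmfExp_mul, ← hstep]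
    rw [h2]; ring
  -- J(π') as a sum over time
  have hJ' : Jret P r γ π' μ = ∑' t, γ ^ t * pmfExp (d t) ρ := by
    have hVs : ∀ s : S, Vval P r γ π' s
        = ∑' t, γ ^ t * pmfExp (stateDist P π' (PMF.pure s) t) ρ := fun s => rfl
    have hsum : ∀ s : S, Summable fun t =>
        (μ s).toReal * (γ ^ t * pmfExp (stateDist P π' (PMF.pure s) t) ρ) :=
      fun s => ((PDL.summable_geom hγ0 hγ1 _ (∑ x, |ρ x|)
        fun t => PDL.pmfExp_abs_le _ ρ).mul_left _)
    calc Jret P r γ π' μ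
        = ∑ s, (μ s).toReal * Vval P r γ π' s := rfl
      _ = ∑ s, (μ s).toReal * ∑' t, γ ^ t * pmfExp (stateDist P π' (PMF.pure s) t) ρ :=
          Finset.sum_congr rfl fun s _ => by rw [hVs s]
      _ = ∑ s, ∑' t, (μ s).toReal * (γ ^ t * pmfExp (stateDist P π' (PMF.pure s) t) ρ) := by
          exact Finset.sum_congr rfl fun s _ => (tsum_mul_left).symm
      _ = ∑' t, ∑ s, (μ s).toReal * (γ ^ t * pmfExp (stateDist P π' (PMF.pure s) t) ρ) :=
          (Summable.tsum_finsetSum fun s _ => hsum s).symm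
      _ = ∑' t, γ ^ t * pmfExp (d t) ρ := by
          refine tsum_congr fun t => ?_
          rw [hd, PDL.stateDist_eq, PDL.pmfExp_bind]
          unfold pmfExp
          rw [Finset.mul_sum]
          exact (Finset.sum_congr rfl fun s _ => by ring).symm
  -- the series of g sums to J(π') - J(π)
  have hSshift : Summable fun t => γ ^ (t + 1) * pmfExp (d (t + 1)) V :=
    (summable_nat_add_iff 1).mpr SV
  have htel : ∑' t, (γ ^ (t + 1) * pmfExp (d (t + 1)) V - γ ^ t * pmfExp (d t) V)
      = -(pmfExp μ V) := by
    rw [hSshift.tsum_sub SV]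
    have h0 := SV.tsum_eq_zero_add
    have hd0 : d 0 = μ := rfl
    rw [h0, hd0]
    simp
  have hsum_g : ∑' t, γ ^ t * pmfExp (d t) g
      = Jret P r γ π' μ - Jret P r γ π μ := by
    calc ∑' t, γ ^ t * pmfExp (d t) g
        = ∑' t, (γ ^ t * pmfExp (d t) ρ
            + (γ ^ (t + 1) * pmfExp (d (t + 1)) V - γ ^ t * pmfExp (d t) V)) :=
          tsum_congr hterm
      _ = (∑' t, γ ^ t * pmfExp (d t) ρ)
            + ∑' t, (γ ^ (t + 1) * pmfExp (d (t + 1)) V - γ ^ t * pmfExp (d t) V) :=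
          Sρ.tsum_add (hSshift.sub SV)
      _ = Jret P r γ π' μ - Jret P r γ π μ := by
          rw [htel, ← hJ']
          have : Jret P r γ π μ = pmfExp μ V := rfl
          rw [this]; ring
  -- reduce the RHS
  have hRHS : ∑ s, visit P π' μ γ s * g s
      = (1 - γ) * ∑' t, γ ^ t * pmfExp (d t) g := by
    have hsum2 : ∀ s : S, Summable fun t => γ ^ t * ((d t s).toReal * g s) :=
      fun s => PDL.summable_geom hγ0 hγ1 _ |g s| fun t => by
        rw [abs_mul, abs_of_nonneg ENNReal.toReal_nonneg]
        exact mul_le_of_le_one_left (abs_nonneg _) (PDL.toReal_le_one _ s)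
    calc ∑ s, visit P π' μ γ s * g s
        = ∑ s, (1 - γ) * ∑' t, γ ^ t * ((d t s).toReal * g s) := by
          refine Finset.sum_congr rfl fun s _ => ?_
          unfold visit
          rw [mul_assoc, ← tsum_mul_right]
          congr 1
          exact tsum_congr fun t => by ring
      _ = (1 - γ) * ∑' t, ∑ s, γ ^ t * ((d t s).toReal * g s) := by
          rw [← Finset.mul_sum, ← Summable.tsum_finsetSum fun s _ => hsum2 s]
      _ = (1 - γ) * ∑' t, γ ^ t * pmfExp (d t) g := by
          congr 1
          refine tsum_congr fun t => ?_
          unfold pmfExp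
          rw [Finset.mul_sum]
  rw [hRHS, ← mul_assoc, one_div, inv_mul_cancel₀ hne, one_mul, hsum_g]
end

section
/- (Theorem 3: two-sided bound on the return of the mixed behavior policy.) Suppose 0 ≤ r(s,a) ≤ R_max for all s ∈ S and a ∈ A, and that for every state s, π^s(s)(a) > 0 whenever π^t(s)(a) > 0. Let π_mix be the mixed policy determined by teacher π^t, student π^s, and intervention indicator T : S → {0,1}, and let ω := E_{s ~ ν^{π_mix,μ}}[T(s)] be the intervention rate. Let H and κ be real numbers with H − κ ≥ 0 such that D_KL(π^t(s) ‖ π^s(s)) ≤ H − κ for every state s. Then J(π^t) − (√2 · (1−ω) · R_max/(1−γ)²) · √(H − κ) ≤ J(π_mix) ≤ J(π^t) + (√2 · (1−ω) · R_max/(1−γ)²) · √(H − κ). -/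
open scoped BigOperators

set_option linter.unusedSectionVars false

namespace ThmAux

section Exp
variable {X Y : Type*} [Fintype X] [Fintype Y]

lemma sum_toReal (p : PMF X) : ∑ x, (p x).toReal = 1 := by
  have h := p.tsum_coe
  rw [tsum_fintype] at h
  rw [← ENNReal.toReal_sum (fun a _ => p.apply_ne_top a), h, ENNReal.toReal_one]

lemma pmfExp_const (p : PMF X) (c : ℝ) : pmfExp p (fun _ => c) = c := by
  simp [pmfExp, ← Finset.sum_mul, sum_toReal]

lemma pmfExp_nonneg (p : PMF X) {f : X → ℝ} (hf : ∀ x, 0 ≤ f x) : 0 ≤ pmfExp p f :=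
  Finset.sum_nonneg fun x _ => mul_nonneg ENNReal.toReal_nonneg (hf x)

lemma pmfExp_mono (p : PMF X) {f g : X → ℝ} (h : ∀ x, f x ≤ g x) : pmfExp p f ≤ pmfExp p g :=
  Finset.sum_le_sum fun x _ => mul_le_mul_of_nonneg_left (h x) ENNReal.toReal_nonneg

lemma pmfExp_le (p : PMF X) {f : X → ℝ} {c : ℝ} (h : ∀ x, f x ≤ c) : pmfExp p f ≤ c := by
  calc pmfExp p f ≤ pmfExp p (fun _ => c) := pmfExp_mono p h
  _ = c := pmfExp_const p c

lemma abs_pmfExp_le (p : PMF X) {f : X → ℝ} {c : ℝ} (h : ∀ x, |f x| ≤ c) :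
    |pmfExp p f| ≤ c := by
  have h1 : pmfExp p f ≤ c := pmfExp_le p fun x => (abs_le.mp (h x)).2
  have h2 : -c ≤ pmfExp p f := by
    have : pmfExp p (fun _ => -c) ≤ pmfExp p f := pmfExp_mono p fun x => (abs_le.mp (h x)).1
    rwa [pmfExp_const] at this
  exact abs_le.mpr ⟨h2, h1⟩

lemma abs_pmfExp_le_pmfExp (p : PMF X) {f g : X → ℝ} (h : ∀ x, |f x| ≤ g x) :
    |pmfExp p f| ≤ pmfExp p g := by
  calc |pmfExp p f| ≤ ∑ x, |(p x).toReal * f x| := Finset.abs_sum_le_sum_abs _ _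
  _ ≤ pmfExp p g := Finset.sum_le_sum fun x _ => by
      rw [abs_mul, abs_of_nonneg (ENNReal.toReal_nonneg (a := p x))]
      exact mul_le_mul_of_nonneg_left (h x) ENNReal.toReal_nonneg

lemma pmfExp_add (p : PMF X) (f g : X → ℝ) :
    pmfExp p (fun x => f x + g x) = pmfExp p f + pmfExp p g := by
  simp [pmfExp, mul_add, Finset.sum_add_distrib]

lemma pmfExp_sub (p : PMF X) (f g : X → ℝ) :
    pmfExp p (fun x => f x - g x) = pmfExp p f - pmfExp p g := by
  simp [pmfExp, mul_sub, Finset.sum_sub_distrib]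

lemma pmfExp_mul_left (p : PMF X) (c : ℝ) (f : X → ℝ) :
    pmfExp p (fun x => c * f x) = c * pmfExp p f := by
  simp only [pmfExp, Finset.mul_sum]
  exact Finset.sum_congr rfl fun x _ => by ring

lemma pmfExp_pure (s : X) (f : X → ℝ) : pmfExp (PMF.pure s) f = f s := by
  simp [pmfExp, PMF.pure_apply]
  rw [Finset.sum_eq_single s] <;> simp +contextual [eq_comm]

lemma bind_apply_toReal (p : PMF X) (k : X → PMF Y) (y : Y) :
    ((p.bind k) y).toReal = ∑ x, (p x).toReal * ((k x) y).toReal := by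
  rw [PMF.bind_apply, tsum_fintype,
    ENNReal.toReal_sum (fun a _ => ENNReal.mul_ne_top (p.apply_ne_top a) ((k a).apply_ne_top y))]
  exact Finset.sum_congr rfl fun x _ => ENNReal.toReal_mul

lemma pmfExp_bind (p : PMF X) (k : X → PMF Y) (f : Y → ℝ) :
    pmfExp (p.bind k) f = pmfExp p (fun x => pmfExp (k x) f) := by
  unfold pmfExp
  simp only [bind_apply_toReal, Finset.sum_mul, Finset.mul_sum]
  rw [Finset.sum_comm]
  exact Finset.sum_congr rfl fun x _ => Finset.sum_congr rfl fun y _ => by ring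

/-- swap a tsum with a pmfExp -/
lemma tsum_pmfExp (p : PMF X) (F : ℕ → X → ℝ) (h : ∀ x, Summable (fun t => F t x)) :
    ∑' t, pmfExp p (F t) = pmfExp p (fun x => ∑' t, F t x) := by
  unfold pmfExp
  rw [Summable.tsum_finsetSum (fun x _ => ((h x).mul_left _))]
  exact Finset.sum_congr rfl fun x _ => (tsum_mul_left)

end Exp

section MDP

variable {S A : Type*} [Fintype S] [Fintype A]
variable (P : S → A → PMF S) (π : S → PMF A)

lemma stateDist_eq_bind (μ : PMF S) (t : ℕ) :
    stateDist P π μ t = μ.bind (fun s => stateDist P π (PMF.pure s) t) := by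
  induction t generalizing μ with
  | zero => simp [stateDist]
  | succ t ih =>
      show (stateDist P π μ t).bind _ = _
      rw [ih μ, PMF.bind_bind]
      exact congrArg _ (funext fun s => rfl)

lemma stateDist_succ_shift (μ : PMF S) (t : ℕ) :
    stateDist P π μ (t + 1) =
      stateDist P π (μ.bind fun x => (π x).bind fun a => P x a) t := by
  induction t with
  | zero => rfl
  | succ t ih =>
      show (stateDist P π μ (t+1)).bind _ = _
      rw [ih]; rfl

lemma stateDist_pure_succ (s : S) (t : ℕ) :
    stateDist P π (PMF.pure s) (t + 1) =
      (π s).bind fun a => (P s a).bind fun s' => stateDist P π (PMF.pure s') t := by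
  rw [stateDist_succ_shift, PMF.pure_bind, stateDist_eq_bind, PMF.bind_bind]

end MDP


section Value

variable {S A : Type*} [Fintype S] [Fintype A]
variable (P : S → A → PMF S) (r : S → A → ℝ) {γ : ℝ}

lemma summable_geo_bound (hγ0 : 0 ≤ γ) (hγ1 : γ < 1) {c : ℕ → ℝ} {C : ℝ}
    (hc : ∀ t, |c t| ≤ C) : Summable (fun t => γ ^ t * c t) := by
  refine Summable.of_norm_bounded (g := fun t => C * γ ^ t)
    ((summable_geometric_of_lt_one hγ0 hγ1).mul_left C) (fun t => ?_)
  rw [Real.norm_eq_abs, abs_mul, abs_pow, abs_of_nonneg hγ0, mul_comm]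
  exact mul_le_mul_of_nonneg_right (hc t) (pow_nonneg hγ0 t)

variable (hγ0 : 0 ≤ γ) (hγ1 : γ < 1)
variable {Rmax : ℝ} (hr : ∀ (s : S) (a : A), 0 ≤ r s a ∧ r s a ≤ Rmax)

/-- one-step expected reward -/
noncomputable def gRew (π : S → PMF A) (x : S) : ℝ := pmfExp (π x) fun a => r x a

include hr

lemma gRew_bound (π : S → PMF A) (x : S) : 0 ≤ gRew r π x ∧ gRew r π x ≤ Rmax :=
  ⟨pmfExp_nonneg _ fun a => (hr x a).1, pmfExp_le _ fun a => (hr x a).2⟩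

include hγ0 hγ1

lemma summable_V (π : S → PMF A) (μ : PMF S) :
    Summable fun t => γ ^ t * pmfExp (stateDist P π μ t) (gRew r π) := by
  refine summable_geo_bound hγ0 hγ1 (C := Rmax) fun t => abs_pmfExp_le _ fun x => ?_
  rw [abs_of_nonneg (gRew_bound r hr π x).1]; exact (gRew_bound r hr π x).2

lemma Vval_nonneg (π : S → PMF A) (s : S) : 0 ≤ Vval P r γ π s :=
  tsum_nonneg fun t => mul_nonneg (pow_nonneg hγ0 t)
    (pmfExp_nonneg _ fun x => (gRew_bound r hr π x).1)

lemma Vval_le (π : S → PMF A) (s : S) : Vval P r γ π s ≤ Rmax / (1 - γ) := by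
  have h1 : Vval P r γ π s ≤ ∑' t : ℕ, Rmax * γ ^ t := by
    refine Summable.tsum_le_tsum (fun t => ?_) (summable_V P r hγ0 hγ1 hr π (PMF.pure s))
      (((summable_geometric_of_lt_one hγ0 hγ1).mul_left Rmax))
    rw [mul_comm Rmax]
    exact mul_le_mul_of_nonneg_left (pmfExp_le _ fun x => (gRew_bound r hr π x).2)
      (pow_nonneg hγ0 t)
  rwa [tsum_mul_left, tsum_geometric_of_lt_one hγ0 hγ1, ← div_eq_mul_inv] at h1

lemma abs_Vval_le (π : S → PMF A) (s : S) : |Vval P r γ π s| ≤ Rmax / (1 - γ) := by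
  rw [abs_of_nonneg (Vval_nonneg P r hγ0 hγ1 hr π s)]; exact Vval_le P r hγ0 hγ1 hr π s

/-- Bellman-type step: value as reward plus discounted next value. -/
lemma Vval_step (π : S → PMF A) (s : S) :
    Vval P r γ π s = gRew r π s +
      γ * pmfExp ((π s).bind fun a => P s a) (Vval P r γ π) := by
  have hsum : Summable fun t => γ ^ t *
      pmfExp (stateDist P π (PMF.pure s) t) (gRew r π) :=
    summable_V P r hγ0 hγ1 hr π (PMF.pure s)
  have h0 : Vval P r γ π s = gRew r π s + ∑' t : ℕ, γ ^ (t+1) *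
      pmfExp (stateDist P π (PMF.pure s) (t+1)) (gRew r π) := by
    have hV : Vval P r γ π s = ∑' t : ℕ,
        γ ^ t * pmfExp (stateDist P π (PMF.pure s) t) (gRew r π) := rfl
    rw [hV, Summable.tsum_eq_zero_add hsum, pow_zero, one_mul,
      show stateDist P π (PMF.pure s) 0 = PMF.pure s from rfl, pmfExp_pure]
  rw [h0]
  congr 1
  have hshift : ∀ t : ℕ, stateDist P π (PMF.pure s) (t+1) =
      ((π s).bind fun a => P s a).bind fun s' => stateDist P π (PMF.pure s') t := by
    intro t
    rw [stateDist_pure_succ, PMF.bind_bind]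
  have : ∀ t : ℕ, γ ^ (t+1) * pmfExp (stateDist P π (PMF.pure s) (t+1)) (gRew r π)
      = γ * pmfExp ((π s).bind fun a => P s a)
          (fun s' => γ ^ t * pmfExp (stateDist P π (PMF.pure s') t) (gRew r π)) := by
    intro t
    rw [hshift t, pmfExp_bind, pmfExp_mul_left, pow_succ]
    ring
  rw [tsum_congr this, tsum_mul_left]
  congr 1
  rw [tsum_pmfExp]
  · rfl
  · exact fun x => summable_V P r hγ0 hγ1 hr π (PMF.pure x)

lemma Vval_eq_pmfExp_Qval (π : S → PMF A) (s : S) :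
    Vval P r γ π s = pmfExp (π s) (Qval P r γ π s) := by
  rw [Vval_step P r hγ0 hγ1 hr π s, gRew, pmfExp_bind, ← pmfExp_mul_left, ← pmfExp_add]
  rfl

lemma pmfExp_Adv_self (π : S → PMF A) (s : S) :
    pmfExp (π s) (Adv P r γ π s) = 0 := by
  have : pmfExp (π s) (Adv P r γ π s)
      = pmfExp (π s) (Qval P r γ π s) - pmfExp (π s) (fun _ => Vval P r γ π s) := by
    rw [← pmfExp_sub]; rfl
  rw [this, pmfExp_const, ← Vval_eq_pmfExp_Qval P r hγ0 hγ1 hr, sub_self]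

/-- Return as a discounted sum over time of expected one-step rewards. -/
lemma Jret_eq_tsum (π : S → PMF A) (μ : PMF S) :
    Jret P r γ π μ = ∑' t : ℕ, γ ^ t * pmfExp (stateDist P π μ t) (gRew r π) := by
  rw [Jret]
  have : Vval P r γ π = fun s => ∑' t : ℕ,
      γ ^ t * pmfExp (stateDist P π (PMF.pure s) t) (gRew r π) := rfl
  rw [this, ← tsum_pmfExp μ _ (fun x => summable_V P r hγ0 hγ1 hr π (PMF.pure x))]
  refine tsum_congr fun t => ?_
  rw [stateDist_eq_bind P π μ t, pmfExp_bind, ← pmfExp_mul_left]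

end Value


section PerfDiff

variable {S A : Type*} [Fintype S] [Fintype A]
variable (P : S → A → PMF S) (r : S → A → ℝ) {γ : ℝ}
variable (hγ0 : 0 ≤ γ) (hγ1 : γ < 1)
variable {Rmax : ℝ} (hr : ∀ (s : S) (a : A), 0 ≤ r s a ∧ r s a ≤ Rmax)

include hγ0 hγ1 hr

lemma summable_u (π' π : S → PMF A) (μ : PMF S) :
    Summable fun t => γ ^ t * pmfExp (stateDist P π' μ t) (Vval P r γ π) :=
  summable_geo_bound hγ0 hγ1 (C := Rmax / (1 - γ)) fun t =>
    abs_pmfExp_le _ fun s => abs_Vval_le P r hγ0 hγ1 hr π s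

lemma perf_diff (π' π : S → PMF A) (μ : PMF S) :
    Jret P r γ π' μ - Jret P r γ π μ =
      ∑' t : ℕ, γ ^ t * pmfExp (stateDist P π' μ t)
        (fun s => pmfExp (π' s) (Adv P r γ π s)) := by
  set u : ℕ → ℝ := fun t => pmfExp (stateDist P π' μ t) (Vval P r γ π) with hu
  have hf : ∀ s : S, pmfExp (π' s) (Adv P r γ π s) =
      gRew r π' s + (γ * pmfExp ((π' s).bind fun a => P s a) (Vval P r γ π)
        - Vval P r γ π s) := by
    intro s
    have e1 : pmfExp (π' s) (Adv P r γ π s)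
        = pmfExp (π' s) (fun a => Qval P r γ π s a) - Vval P r γ π s := by
      rw [← pmfExp_const (π' s) (Vval P r γ π s), ← pmfExp_sub]
      rfl
    have e2 : pmfExp (π' s) (fun a => Qval P r γ π s a)
        = gRew r π' s + γ * pmfExp ((π' s).bind fun a => P s a) (Vval P r γ π) := by
      rw [pmfExp_bind, ← pmfExp_mul_left]
      show _ = pmfExp (π' s) (fun a => r s a)
        + pmfExp (π' s) (fun a => γ * pmfExp (P s a) (Vval P r γ π))
      rw [← pmfExp_add]
      rfl
    rw [e1, e2]
    ring
  have hterm : ∀ t : ℕ, γ ^ t * pmfExp (stateDist P π' μ t)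
      (fun s => pmfExp (π' s) (Adv P r γ π s)) =
      γ ^ t * pmfExp (stateDist P π' μ t) (gRew r π')
        + (γ ^ (t+1) * u (t+1) - γ ^ t * u t) := by
    intro t
    have key : pmfExp (stateDist P π' μ t)
        (fun s => pmfExp ((π' s).bind fun a => P s a) (Vval P r γ π)) = u (t+1) := by
      show _ = pmfExp (stateDist P π' μ (t+1)) (Vval P r γ π)
      rw [show stateDist P π' μ (t+1)
          = (stateDist P π' μ t).bind (fun s => (π' s).bind fun a => P s a) from rfl,
        pmfExp_bind]
    have h3 : pmfExp (stateDist P π' μ t)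
        (fun s => pmfExp (π' s) (Adv P r γ π s)) =
        pmfExp (stateDist P π' μ t) (gRew r π') + (γ * u (t+1) - u t) := by
      rw [congrArg (pmfExp (stateDist P π' μ t)) (funext hf), pmfExp_add, pmfExp_sub,
        pmfExp_mul_left, key]
    rw [h3, pow_succ]
    ring
  rw [tsum_congr hterm]
  have hsg : Summable fun t => γ ^ t * pmfExp (stateDist P π' μ t) (gRew r π') :=
    summable_V P r hγ0 hγ1 hr π' μ
  have hsu : Summable fun t => γ ^ t * u t := summable_u P r hγ0 hγ1 hr π' π μ
  have hw : Summable fun t => γ ^ (t+1) * u (t+1) :=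
    (summable_nat_add_iff (f := fun t => γ ^ t * u t) 1).mpr hsu
  rw [Summable.tsum_add hsg (hw.sub hsu), Summable.tsum_sub hw hsu, ← Jret_eq_tsum P r hγ0 hγ1 hr π' μ]
  have hz : ∑' t : ℕ, γ ^ (t+1) * u (t+1) = (∑' t : ℕ, γ ^ t * u t) - γ ^ 0 * u 0 := by
    have := Summable.tsum_eq_zero_add hsu
    linarith
  have hu0 : u 0 = Jret P r γ π μ := rfl
  rw [hz, pow_zero, one_mul, hu0]
  ring

end PerfDiff

/-- The key scalar function in the proof of Pinsker's inequality. -/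
noncomputable def hFun (t : ℝ) : ℝ := t * Real.log t - t + 1 - 3/2 * (t-1)^2 / (t+2)

/-- Its derivative on `(0,∞)`. -/
noncomputable def psiFun (t : ℝ) : ℝ := Real.log t - 3/2 * ((t-1)*(t+5)) / (t+2)^2

lemma hasDerivAt_hFun {t : ℝ} (ht : 0 < t) : HasDerivAt hFun (psiFun t) t := by
  have h2 : (t + 2) ≠ 0 := by positivity
  have d1 : HasDerivAt (fun x : ℝ => x * Real.log x) (Real.log t + 1) t := by
    have := (hasDerivAt_id t).mul (Real.hasDerivAt_log ht.ne')
    refine this.congr_deriv ?_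
    rw [id_eq, mul_inv_cancel₀ ht.ne']
    ring
  have dnum : HasDerivAt (fun x : ℝ => 3/2 * (x-1)^2) (3/2 * (2*(t-1)^1*1)) t := by
    exact (((hasDerivAt_id t).sub_const 1).pow 2).const_mul (3/2)
  have dden : HasDerivAt (fun x : ℝ => x + 2) 1 t := (hasDerivAt_id t).add_const 2
  have d2 : HasDerivAt (fun x : ℝ => 3/2 * (x-1)^2 / (x+2))
      ((3/2 * (2*(t-1)^1*1) * (t+2) - 3/2 * (t-1)^2 * 1) / (t+2)^2) t := dnum.div dden h2
  have := ((d1.sub (hasDerivAt_id t)).add_const 1).sub d2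
  refine this.congr_deriv ?_
  unfold psiFun
  field_simp
  ring

lemma hasDerivAt_psiFun {t : ℝ} (ht : 0 < t) :
    HasDerivAt psiFun ((t-1)^2 * (t+8) / (t * (t+2)^3)) t := by
  have h2 : (t + 2) ≠ 0 := by positivity
  have dnum : HasDerivAt (fun x : ℝ => 3/2 * ((x-1)*(x+5)))
      (3/2 * (1 * (t+5) + (t-1) * 1)) t :=
    (((hasDerivAt_id t).sub_const 1).mul ((hasDerivAt_id t).add_const 5)).const_mul (3/2)
  have dden : HasDerivAt (fun x : ℝ => (x+2)^2) (2*(t+2)^1*1) t :=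
    ((hasDerivAt_id t).add_const 2).pow 2
  have d2 : HasDerivAt (fun x : ℝ => 3/2 * ((x-1)*(x+5)) / (x+2)^2)
      ((3/2 * (1 * (t+5) + (t-1) * 1) * (t+2)^2 - 3/2 * ((t-1)*(t+5)) * (2*(t+2)^1*1))
        / ((t+2)^2)^2) t := dnum.div dden (pow_ne_zero 2 h2)
  have := (Real.hasDerivAt_log ht.ne').sub d2
  refine this.congr_deriv ?_
  field_simp
  ring

lemma psiFun_one : psiFun 1 = 0 := by
  unfold psiFun
  norm_num

lemma hFun_one : hFun 1 = 0 := by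
  unfold hFun
  norm_num

lemma psiFun_nonneg {t : ℝ} (ht : 1 ≤ t) : 0 ≤ psiFun t := by
  have mono : MonotoneOn psiFun (Set.Ioi (0:ℝ)) := by
    refine monotoneOn_of_deriv_nonneg (convex_Ioi 0) (fun x hx => ?_) (fun x hx => ?_)
      (fun x hx => ?_)
    · exact (hasDerivAt_psiFun hx).continuousAt.continuousWithinAt
    · rw [interior_Ioi] at hx
      exact (hasDerivAt_psiFun hx).differentiableAt.differentiableWithinAt
    · rw [interior_Ioi] at hx
      rw [(hasDerivAt_psiFun hx).deriv]
      have hx' : (0:ℝ) < x := hx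
      positivity
  have := mono (Set.mem_Ioi.mpr one_pos) (Set.mem_Ioi.mpr (lt_of_lt_of_le one_pos ht)) ht
  rwa [psiFun_one] at this

lemma psiFun_nonpos {t : ℝ} (ht0 : 0 < t) (ht : t ≤ 1) : psiFun t ≤ 0 := by
  have mono : MonotoneOn psiFun (Set.Ioi (0:ℝ)) := by
    refine monotoneOn_of_deriv_nonneg (convex_Ioi 0) (fun x hx => ?_) (fun x hx => ?_)
      (fun x hx => ?_)
    · exact (hasDerivAt_psiFun hx).continuousAt.continuousWithinAt
    · rw [interior_Ioi] at hx
      exact (hasDerivAt_psiFun hx).differentiableAt.differentiableWithinAt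
    · rw [interior_Ioi] at hx
      rw [(hasDerivAt_psiFun hx).deriv]
      have hx' : (0:ℝ) < x := hx
      positivity
  have := mono (Set.mem_Ioi.mpr ht0) (Set.mem_Ioi.mpr one_pos) ht
  rwa [psiFun_one] at this

lemma hFun_nonneg {t : ℝ} (ht : 0 < t) : 0 ≤ hFun t := by
  rcases le_or_gt 1 t with h1 | h1
  · have mono : MonotoneOn hFun (Set.Ici (1:ℝ)) := by
      refine monotoneOn_of_deriv_nonneg (convex_Ici 1) (fun x hx => ?_) (fun x hx => ?_)
        (fun x hx => ?_)
      · have hx0 : (0:ℝ) < x := lt_of_lt_of_le one_pos hx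
        exact (hasDerivAt_hFun hx0).continuousAt.continuousWithinAt
      · rw [interior_Ici] at hx
        exact (hasDerivAt_hFun (lt_trans one_pos hx)).differentiableAt.differentiableWithinAt
      · rw [interior_Ici] at hx
        rw [(hasDerivAt_hFun (lt_trans one_pos hx)).deriv]
        exact psiFun_nonneg hx.le
    have := mono Set.self_mem_Ici h1 h1
    rwa [hFun_one] at this
  · have anti : AntitoneOn hFun (Set.Ioc (0:ℝ) 1) := by
      refine antitoneOn_of_deriv_nonpos (convex_Ioc 0 1) (fun x hx => ?_) (fun x hx => ?_)
        (fun x hx => ?_)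
      · exact (hasDerivAt_hFun hx.1).continuousAt.continuousWithinAt
      · rw [interior_Ioc] at hx
        exact (hasDerivAt_hFun hx.1).differentiableAt.differentiableWithinAt
      · rw [interior_Ioc] at hx
        rw [(hasDerivAt_hFun hx.1).deriv]
        exact psiFun_nonpos hx.1 hx.2.le
    have := anti (Set.mem_Ioc.mpr ⟨ht, h1.le⟩) (Set.mem_Ioc.mpr ⟨one_pos, le_refl 1⟩) h1.le
    rwa [hFun_one] at this

lemma scalar_ineq {t : ℝ} (ht : 0 < t) :
    3 * (t-1)^2 / (2 * (t+2)) ≤ t * Real.log t - t + 1 := by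
  have := hFun_nonneg ht
  unfold hFun at this
  have he : 3 * (t-1)^2 / (2 * (t+2)) = 3/2 * (t-1)^2 / (t+2) := by
    field_simp
  linarith [he ▸ this]

lemma pointwise_ineq (x y : ℝ) (hx : 0 ≤ x) (hy : 0 ≤ y) (hxy : x ≠ 0 → y ≠ 0) :
    3 * (x-y)^2 / (2 * (x+2*y)) ≤ (if x = 0 then 0 else x * Real.log (x / y)) - x + y := by
  rcases eq_or_ne x 0 with hx0 | hx0
  · subst hx0
    rw [if_pos rfl]
    rcases eq_or_ne y 0 with hy0 | hy0
    · subst hy0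
      norm_num
    · have hy' : 0 < y := lt_of_le_of_ne hy (Ne.symm hy0)
      have e : 3 * ((0:ℝ)-y)^2 / (2 * (0+2*y)) = 3 * y / 4 := by
        field_simp
        ring
      rw [e]
      linarith
  · have hy' : 0 < y := lt_of_le_of_ne hy (Ne.symm (hxy hx0))
    have hx' : 0 < x := lt_of_le_of_ne hx (Ne.symm hx0)
    have ht : 0 < x / y := div_pos hx' hy'
    have key := scalar_ineq ht
    rw [if_neg hx0]
    have hden : x + 2*y ≠ 0 := by positivity
    have h1 : y * (3 * (x/y-1)^2 / (2 * (x/y+2))) = 3 * (x-y)^2 / (2 * (x+2*y)) := by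
      field_simp
    have h2 : y * ((x/y) * Real.log (x/y) - x/y + 1) = x * Real.log (x/y) - x + y := by
      field_simp
      try ring
    have := mul_le_mul_of_nonneg_left key hy
    rw [h1, h2] at this
    exact this


section Pinsker
variable {X : Type*} [Fintype X]

lemma pinsker (p q : PMF X) (habs : ∀ x, p x ≠ 0 → q x ≠ 0) :
    (∑ x, |(p x).toReal - (q x).toReal|) ≤ Real.sqrt (2 * pmfKL p q) := by
  set Pp : X → ℝ := fun x => (p x).toReal with hPp
  set Qq : X → ℝ := fun x => (q x).toReal with hQq
  have hP0 : ∀ x, 0 ≤ Pp x := fun x => ENNReal.toReal_nonneg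
  have hQ0 : ∀ x, 0 ≤ Qq x := fun x => ENNReal.toReal_nonneg
  have hterm : ∀ x, 3 * (Pp x - Qq x)^2 / (2 * (Pp x + 2 * Qq x)) ≤
      (if p x = 0 then 0 else Pp x * Real.log (Pp x / Qq x)) - Pp x + Qq x := by
    intro x
    have hxy : Pp x ≠ 0 → Qq x ≠ 0 := by
      intro h hq
      have h1 : p x ≠ 0 := fun hz => h (by simp [hPp, hz])
      have h2 : q x ≠ 0 := habs x h1
      exact h2 (by
        have := ENNReal.toReal_eq_zero_iff (q x)
        rw [hQq] at hq
        simp only at hq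
        rcases this.mp hq with h' | h'
        · exact h'
        · exact absurd h' (q.apply_ne_top x))
    have base := pointwise_ineq (Pp x) (Qq x) (hP0 x) (hQ0 x) hxy
    have hif : (if Pp x = 0 then (0:ℝ) else Pp x * Real.log (Pp x / Qq x)) =
        (if p x = 0 then (0:ℝ) else Pp x * Real.log (Pp x / Qq x)) := by
      rcases eq_or_ne (p x) 0 with h | h
      · rw [if_pos h, if_pos (by simp [hPp, h])]
      · rw [if_neg h, if_neg (fun hz => h ((ENNReal.toReal_eq_zero_iff (p x)).mp hz
          |>.resolve_right (p.apply_ne_top x)))]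
    rwa [hif] at base
  have hKL : ∑ x, ((if p x = 0 then 0 else Pp x * Real.log (Pp x / Qq x)) - Pp x + Qq x)
      = pmfKL p q := by
    rw [Finset.sum_add_distrib, Finset.sum_sub_distrib]
    have h1 : ∑ x, Pp x = 1 := sum_toReal p
    have h2 : ∑ x, Qq x = 1 := sum_toReal q
    rw [h1, h2, pmfKL]
    ring
  set F : X → ℝ := fun x => Real.sqrt (3 * (Pp x - Qq x)^2 / (2 * (Pp x + 2 * Qq x))) with hF
  set G : X → ℝ := fun x => Real.sqrt (2 * (Pp x + 2 * Qq x) / 3) with hG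
  have hFG : ∀ x, F x * G x = |Pp x - Qq x| := by
    intro x
    rcases eq_or_ne (Pp x + 2 * Qq x) 0 with hz | hz
    · have hp : Pp x = 0 := by nlinarith [hP0 x, hQ0 x]
      have hq : Qq x = 0 := by nlinarith [hP0 x, hQ0 x]
      simp [hF, hG, hp, hq]
    · rw [hF, hG, ← Real.sqrt_mul (by positivity)]
      have : 3 * (Pp x - Qq x)^2 / (2 * (Pp x + 2 * Qq x)) * (2 * (Pp x + 2 * Qq x) / 3)
          = (Pp x - Qq x)^2 := by
        rw [div_mul_div_comm, div_eq_iff (mul_ne_zero (mul_ne_zero two_ne_zero hz) three_ne_zero)]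
        ring
        try ring
      rw [this, Real.sqrt_sq_eq_abs]
  have hF2 : ∀ x, F x ^ 2 = 3 * (Pp x - Qq x)^2 / (2 * (Pp x + 2 * Qq x)) := by
    intro x
    rw [hF, Real.sq_sqrt (div_nonneg (by positivity) (by positivity))]
  have hG2 : ∀ x, G x ^ 2 = 2 * (Pp x + 2 * Qq x) / 3 := by
    intro x
    rw [hG, Real.sq_sqrt (div_nonneg (by positivity) (by norm_num))]
  have cs := Finset.sum_mul_sq_le_sq_mul_sq Finset.univ F G
  have hGsum : ∑ x, G x ^ 2 = 2 := by
    rw [Finset.sum_congr rfl fun x _ => hG2 x]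
    have he : ∀ x, 2 * (Pp x + 2 * Qq x) / 3 = (2/3) * Pp x + (4/3) * Qq x := fun x => by ring
    rw [Finset.sum_congr rfl fun x _ => he x, Finset.sum_add_distrib, ← Finset.mul_sum,
      ← Finset.mul_sum, sum_toReal p, sum_toReal q]
    norm_num
  have hFsum : ∑ x, F x ^ 2 ≤ pmfKL p q := by
    rw [← hKL]
    exact Finset.sum_le_sum fun x _ => (hF2 x).le.trans (hterm x)
  have hsq : (∑ x, |Pp x - Qq x|) ^ 2 ≤ 2 * pmfKL p q := by
    have h1 : (∑ x, F x * G x) ^ 2 ≤ (∑ x, F x ^ 2) * ∑ x, G x ^ 2 := cs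
    rw [Finset.sum_congr rfl fun x _ => hFG x, hGsum] at h1
    have hKL0 : 0 ≤ pmfKL p q := le_trans (Finset.sum_nonneg fun x _ => by
      rw [hF2 x]; exact div_nonneg (by positivity) (by positivity)) hFsum
    nlinarith
  have habs0 : 0 ≤ ∑ x, |Pp x - Qq x| := Finset.sum_nonneg fun x _ => abs_nonneg _
  calc ∑ x, |Pp x - Qq x| = Real.sqrt ((∑ x, |Pp x - Qq x|) ^ 2) :=
        (Real.sqrt_sq habs0).symm
  _ ≤ Real.sqrt (2 * pmfKL p q) := Real.sqrt_le_sqrt hsq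

end Pinsker

end ThmAux

set_option maxHeartbeats 1000000 in
/-- Theorem 3 (two-sided bound on the return of the mixed behavior policy): with
intervention rate `ω = E_{s ~ ν^{π_mix,μ}}[T(s)]` and `D_KL(π^t(s)‖π^s(s)) ≤ H − κ` for all
states, `J(π^t) − √2(1−ω)R_max/(1−γ)² √(H−κ) ≤ J(π_mix) ≤ J(π^t) + √2(1−ω)R_max/(1−γ)² √(H−κ)`. -/
theorem mix_return_two_sided_bound {S A : Type*}
    [Fintype S] [Nonempty S] [Fintype A] [Nonempty A]
    (P : S → A → PMF S) (r : S → A → ℝ) (γ : ℝ) (hγ0 : 0 ≤ γ) (hγ1 : γ < 1)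
    (Rmax : ℝ) (hr : ∀ (s : S) (a : A), 0 ≤ r s a ∧ r s a ≤ Rmax)
    (πt πs : S → PMF A) (habs : ∀ (s : S) (a : A), 0 < πt s a → 0 < πs s a)
    (T : S → Bool) (μ : PMF S)
    (ω : ℝ)
    (hω : ω = ∑ s, visit P (mixPolicy πt πs T) μ γ s * (if T s then (1 : ℝ) else 0))
    (H κ : ℝ) (hHκ : 0 ≤ H - κ)
    (hKL : ∀ s : S, pmfKL (πt s) (πs s) ≤ H - κ) :
    Jret P r γ πt μ - Real.sqrt 2 * (1 - ω) * Rmax / (1 - γ) ^ 2 * Real.sqrt (H - κ) ≤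
        Jret P r γ (mixPolicy πt πs T) μ ∧
      Jret P r γ (mixPolicy πt πs T) μ ≤
        Jret P r γ πt μ + Real.sqrt 2 * (1 - ω) * Rmax / (1 - γ) ^ 2 * Real.sqrt (H - κ) := by
  classical
  set π' := mixPolicy πt πs T with hπ'
  have h1γ : 0 < 1 - γ := by linarith
  have hne : (1:ℝ) - γ ≠ 0 := h1γ.ne'
  have hRmax0 : 0 ≤ Rmax :=
    (hr (Classical.arbitrary S) (Classical.arbitrary A)).1.trans
      (hr (Classical.arbitrary S) (Classical.arbitrary A)).2
  set M := Rmax / (1 - γ) with hM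
  have hM0 : 0 ≤ M := div_nonneg hRmax0 h1γ.le
  have hQ : ∀ s a, |Qval P r γ πt s a| ≤ M := by
    intro s a
    have h0 : 0 ≤ Qval P r γ πt s a :=
      add_nonneg (hr s a).1 (mul_nonneg hγ0
        (ThmAux.pmfExp_nonneg _ fun x => ThmAux.Vval_nonneg P r hγ0 hγ1 hr πt x))
    have hub : Qval P r γ πt s a ≤ Rmax + γ * M :=
      add_le_add (hr s a).2 (mul_le_mul_of_nonneg_left
        (ThmAux.pmfExp_le _ fun x => ThmAux.Vval_le P r hγ0 hγ1 hr πt x) hγ0)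
    have heq : Rmax + γ * M = M := by
      rw [hM]
      field_simp
      ring
    rw [abs_of_nonneg h0]
    linarith
  set D := M * Real.sqrt (2 * (H - κ)) with hD
  have hD0 : 0 ≤ D := mul_nonneg hM0 (Real.sqrt_nonneg _)
  have hAdvB : ∀ s, |pmfExp (π' s) (Adv P r γ πt s)| ≤ (if T s then 0 else 1) * D := by
    intro s
    by_cases hT : T s
    · have hps : π' s = πt s := by simp [hπ', mixPolicy, hT]
      rw [if_pos hT, hps, ThmAux.pmfExp_Adv_self P r hγ0 hγ1 hr]
      simp
    · have hps : π' s = πs s := by simp [hπ', mixPolicy, hT]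
      rw [if_neg hT, one_mul, hps]
      have e1 : pmfExp (πs s) (Adv P r γ πt s) =
          pmfExp (πs s) (fun a => Qval P r γ πt s a)
            - pmfExp (πt s) (fun a => Qval P r γ πt s a) := by
        have h1 : pmfExp (πs s) (Adv P r γ πt s) =
            pmfExp (πs s) (fun a => Qval P r γ πt s a) - Vval P r γ πt s := by
          rw [← ThmAux.pmfExp_const (πs s) (Vval P r γ πt s), ← ThmAux.pmfExp_sub]
          rfl
        rw [h1, ThmAux.Vval_eq_pmfExp_Qval P r hγ0 hγ1 hr]
      have e2 : pmfExp (πs s) (fun a => Qval P r γ πt s a)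
            - pmfExp (πt s) (fun a => Qval P r γ πt s a)
          = ∑ a, (((πs s) a).toReal - ((πt s) a).toReal) * Qval P r γ πt s a := by
        unfold pmfExp
        rw [← Finset.sum_sub_distrib]
        exact Finset.sum_congr rfl fun a _ => by ring
      rw [e1, e2]
      have habs' : ∀ a, (πt s) a ≠ 0 → (πs s) a ≠ 0 := by
        intro a h
        exact (habs s a (pos_iff_ne_zero.mpr h)).ne'
      have hpin := ThmAux.pinsker (πt s) (πs s) habs'
      calc |∑ a, (((πs s) a).toReal - ((πt s) a).toReal) * Qval P r γ πt s a|
          ≤ ∑ a, |(((πs s) a).toReal - ((πt s) a).toReal) * Qval P r γ πt s a| :=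
            Finset.abs_sum_le_sum_abs _ _
        _ ≤ ∑ a, |((πt s) a).toReal - ((πs s) a).toReal| * M := by
            refine Finset.sum_le_sum fun a _ => ?_
            rw [abs_mul, abs_sub_comm]
            exact mul_le_mul_of_nonneg_left (hQ s a) (abs_nonneg _)
        _ = (∑ a, |((πt s) a).toReal - ((πs s) a).toReal|) * M := by
            rw [Finset.sum_mul]
        _ ≤ Real.sqrt (2 * pmfKL (πt s) (πs s)) * M :=
            mul_le_mul_of_nonneg_right hpin hM0
        _ ≤ Real.sqrt (2 * (H - κ)) * M := by
            refine mul_le_mul_of_nonneg_right (Real.sqrt_le_sqrt ?_) hM0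
            have := hKL s
            linarith
        _ = D := by rw [hD]; ring
  have hpd := ThmAux.perf_diff P r hγ0 hγ1 hr π' πt μ
  set c : ℕ → ℝ := fun t => pmfExp (stateDist P π' μ t) (fun s => if T s then (0:ℝ) else 1)
    with hc
  set e : ℕ → ℝ := fun t => pmfExp (stateDist P π' μ t) (fun s => if T s then (1:ℝ) else 0)
    with he
  have hce : ∀ t, c t = 1 - e t := by
    intro t
    have hfe : (fun s => if T s then (0:ℝ) else 1)
        = fun s => (1:ℝ) - (if T s then (1:ℝ) else 0) := by
      funext s
      by_cases hT : T s <;> simp [hT]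
    rw [hc, he]
    simp only [hfe, ThmAux.pmfExp_sub, ThmAux.pmfExp_const]
  have hse : Summable fun t => γ ^ t * e t := by
    refine ThmAux.summable_geo_bound hγ0 hγ1 (C := 1) fun t => ?_
    refine ThmAux.abs_pmfExp_le _ fun s => ?_
    by_cases hT : T s <;> simp [hT]
  have hsc : Summable fun t => γ ^ t * c t := by
    refine ThmAux.summable_geo_bound hγ0 hγ1 (C := 1) fun t => ?_
    refine ThmAux.abs_pmfExp_le _ fun s => ?_
    by_cases hT : T s <;> simp [hT]
  have hωe : ω = (1 - γ) * ∑' t : ℕ, γ ^ t * e t := by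
    rw [hω]
    have h1 : ∀ s, visit P π' μ γ s * (if T s then (1:ℝ) else 0)
        = (1-γ) * ∑' t : ℕ, γ^t * ((stateDist P π' μ t s).toReal
            * (if T s then (1:ℝ) else 0)) := by
      intro s
      rw [visit, mul_assoc, ← tsum_mul_right]
      congr 1
      exact tsum_congr fun t => by ring
    rw [Finset.sum_congr rfl fun s _ => h1 s, ← Finset.mul_sum]
    congr 1
    have hsum : ∀ s : S, Summable fun t : ℕ => γ^t * ((stateDist P π' μ t s).toReal
        * (if T s then (1:ℝ) else 0)) := by
      intro s
      refine ThmAux.summable_geo_bound hγ0 hγ1 (C := 1) fun t => ?_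
      rw [abs_mul]
      have h1 : |(stateDist P π' μ t s).toReal| ≤ 1 := by
        rw [abs_of_nonneg ENNReal.toReal_nonneg]
        exact ENNReal.toReal_le_of_le_ofReal zero_le_one
          (by simpa using (stateDist P π' μ t).coe_le_one s)
      have h2 : |if T s then (1:ℝ) else 0| ≤ 1 := by
        by_cases hT : T s <;> simp [hT]
      calc |(stateDist P π' μ t s).toReal| * |if T s then (1:ℝ) else 0|
          ≤ 1 * 1 := mul_le_mul h1 h2 (abs_nonneg _) zero_le_one
        _ = 1 := by norm_num
    rw [← Summable.tsum_finsetSum (fun s _ => hsum s)]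
    refine tsum_congr fun t => ?_
    rw [he]
    show ∑ s, γ^t * ((stateDist P π' μ t s).toReal * _) = γ ^ t * ∑ s, _
    rw [Finset.mul_sum]
  have hsum_c : ∑' t : ℕ, γ^t * c t = (1 - ω)/(1-γ) := by
    have hrw : (fun t : ℕ => γ^t * c t) = fun t => γ^t - γ^t * e t :=
      funext fun t => by rw [hce]; ring
    rw [hrw, Summable.tsum_sub (summable_geometric_of_lt_one hγ0 hγ1) hse,
      tsum_geometric_of_lt_one hγ0 hγ1, hωe]
    field_simp
  have hsadv : Summable fun t => γ ^ t * pmfExp (stateDist P π' μ t)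
      (fun s => pmfExp (π' s) (Adv P r γ πt s)) := by
    refine ThmAux.summable_geo_bound hγ0 hγ1 (C := D) fun t => ?_
    refine ThmAux.abs_pmfExp_le _ fun s => ?_
    refine (hAdvB s).trans ?_
    by_cases hT : T s <;> simp [hT, hD0]
  have hbound : ∀ t, |γ ^ t * pmfExp (stateDist P π' μ t)
      (fun s => pmfExp (π' s) (Adv P r γ πt s))| ≤ D * (γ^t * c t) := by
    intro t
    rw [abs_mul, abs_pow, abs_of_nonneg hγ0]
    have h1 : |pmfExp (stateDist P π' μ t) (fun s => pmfExp (π' s) (Adv P r γ πt s))|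
        ≤ D * c t := by
      have h2 : |pmfExp (stateDist P π' μ t) (fun s => pmfExp (π' s) (Adv P r γ πt s))|
          ≤ pmfExp (stateDist P π' μ t) (fun s => D * (if T s then (0:ℝ) else 1)) := by
        refine ThmAux.abs_pmfExp_le_pmfExp _ fun s => ?_
        rw [mul_comm]
        exact hAdvB s
      rwa [ThmAux.pmfExp_mul_left] at h2
    calc γ ^ t * |pmfExp (stateDist P π' μ t) (fun s => pmfExp (π' s) (Adv P r γ πt s))|
        ≤ γ ^ t * (D * c t) := mul_le_mul_of_nonneg_left h1 (pow_nonneg hγ0 t)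
      _ = D * (γ^t * c t) := by ring
  have hmain : |Jret P r γ π' μ - Jret P r γ πt μ| ≤ D * ((1 - ω)/(1-γ)) := by
    rw [hpd]
    set F : ℕ → ℝ := fun t => γ ^ t * pmfExp (stateDist P π' μ t)
      (fun s => pmfExp (π' s) (Adv P r γ πt s)) with hFdef
    have hs1 : Summable fun t => |F t| :=
      Summable.of_nonneg_of_le (fun t => abs_nonneg _) hbound (hsc.mul_left D)
    have h2 : |∑' t : ℕ, F t| ≤ ∑' t : ℕ, |F t| := by
      have h3 := norm_tsum_le_tsum_norm (f := F)
        (by simpa only [Real.norm_eq_abs] using hs1)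
      simpa only [Real.norm_eq_abs] using h3
    calc |∑' t : ℕ, F t| ≤ ∑' t : ℕ, |F t| := h2
      _ ≤ ∑' t : ℕ, D * (γ^t * c t) := Summable.tsum_le_tsum hbound hs1 (hsc.mul_left D)
      _ = D * ∑' t : ℕ, γ^t * c t := tsum_mul_left
      _ = D * ((1 - ω)/(1-γ)) := by rw [hsum_c]
  have hDB : D * ((1 - ω)/(1-γ)) =
      Real.sqrt 2 * (1 - ω) * Rmax / (1 - γ) ^ 2 * Real.sqrt (H - κ) := by
    rw [hD, hM, Real.sqrt_mul (by norm_num : (0:ℝ) ≤ 2)]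
    field_simp
  rw [hDB] at hmain
  obtain ⟨hl, hr2⟩ := abs_le.mp hmain
  constructor <;> linarith
end
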